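/- Grounding a variable cannot break stickiness: if Σ is a set of TGDs and Σ' is obtained by replacing, in some rules, certain body variables by constants, then every variable occurrence marked in Σ' (by the marking procedure) corresponds to an occurrence marked in Σ; consequently, if in Σ every marked variable occurring more than once in a rule body is among the replaced (grounded) variables, then Σ' is sticky. -/

import Mathlib

inductive Term where
  | const : ℕ → Term
  | null : ℕ → Term
  | var : ℕ → Term
deriving DecidableEq

structure Atom where
  pred : ℕ
  args : List Term
deriving DecidableEq

structure Rule where
  body : List Atom
  head : Atom
deriving DecidableEq

/-- Term `t` occurs in the body of `σ` in the `i`-th body atom at argument `j`. -/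
def occAt (σ : Rule) (i j : ℕ) (t : Term) : Prop :=
  ∃ a, σ.body[i]? = some a ∧ a.args[j]? = some t

/-- The `i`-th body atom of `σ` has predicate `p`. -/
def occPred (σ : Rule) (i p : ℕ) : Prop :=
  ∃ a, σ.body[i]? = some a ∧ a.pred = p

/-- Variable `v` appears in the head of `σ`. -/
def headHasVar (σ : Rule) (v : ℕ) : Prop :=
  ∃ j : ℕ, σ.head.args[j]? = some (Term.var v)

/-- The marking procedure: `Marked S σ i j` says that the body occurrence at
body atom `i`, argument `j` of rule `σ` is marked w.r.t. the set of rules `S`.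
Preliminary step: mark body occurrences of variables not appearing in the
head. Propagation step: if a marked variable occurs in some body at position
`π = (p, j)`, mark every body occurrence, in any rule of `S`, of a variable
appearing in that rule's head at position `π`. -/
inductive Marked (S : Set Rule) : Rule → ℕ → ℕ → Prop
  | prelim {σ i j v} : σ ∈ S → occAt σ i j (Term.var v) → ¬ headHasVar σ v →
      Marked S σ i j
  | prop {σ i j p σ' v i' j'} : Marked S σ i j → occPred σ i p → σ' ∈ S →
      σ'.head.pred = p → σ'.head.args[j]? = some (Term.var v) →
      occAt σ' i' j' (Term.var v) → Marked S σ' i' j'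

/-- `S` is sticky: no rule of `S` has a marked variable occurring more than
once in its body. -/
def Sticky (S : Set Rule) : Prop :=
  ∀ σ ∈ S, ∀ i j v i' j', Marked S σ i j → occAt σ i j (Term.var v) →
    occAt σ i' j' (Term.var v) → (i, j) = (i', j')

/-- Apply a (per-rule) substitution sending variables to terms. -/
def applyT (s : ℕ → Term) : Term → Term
  | Term.var v => s v
  | t => t

def applyAtom (s : ℕ → Term) (a : Atom) : Atom := ⟨a.pred, a.args.map (applyT s)⟩

def applyRule (s : ℕ → Term) (σ : Rule) : Rule :=
  ⟨σ.body.map (applyAtom s), applyAtom s σ.head⟩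

lemma applyT_var {s : ℕ → Term} (hs : ∀ v, s v = Term.var v ∨ ∃ c, s v = Term.const c)
    {t : Term} {v : ℕ} (h : applyT s t = Term.var v) :
    t = Term.var v ∧ s v = Term.var v := by
  cases t with
  | const c => simp [applyT] at h
  | null n => simp [applyT] at h
  | var w =>
    simp only [applyT] at h
    rcases hs w with h' | ⟨c, h'⟩
    · rw [h'] at h; cases h; exact ⟨rfl, h'⟩
    · rw [h'] at h; cases h

lemma occAt_apply {s : ℕ → Term} (hs : ∀ v, s v = Term.var v ∨ ∃ c, s v = Term.const c)
    {σ : Rule} {i j v} (h : occAt (applyRule s σ) i j (Term.var v)) :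
    occAt σ i j (Term.var v) ∧ s v = Term.var v := by
  obtain ⟨a', ha', hj⟩ := h
  simp only [applyRule, List.getElem?_map] at ha'
  cases hb : σ.body[i]? with
  | none => rw [hb] at ha'; cases ha'
  | some a =>
    rw [hb] at ha'; cases ha'
    simp only [applyAtom, List.getElem?_map] at hj
    cases ht : a.args[j]? with
    | none => rw [ht] at hj; cases hj
    | some t =>
      rw [ht] at hj
      obtain ⟨rfl, hv⟩ := applyT_var hs (Option.some.inj hj)
      exact ⟨⟨a, hb, ht⟩, hv⟩

lemma headGet_apply {s : ℕ → Term} (hs : ∀ v, s v = Term.var v ∨ ∃ c, s v = Term.const c)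
    {σ : Rule} {j : ℕ} {v} (h : (applyRule s σ).head.args[j]? = some (Term.var v)) :
    σ.head.args[j]? = some (Term.var v) ∧ s v = Term.var v := by
  simp only [applyRule, applyAtom, List.getElem?_map] at h
  cases ht : σ.head.args[j]? with
  | none => rw [ht] at h; cases h
  | some t =>
    rw [ht] at h
    obtain ⟨rfl, hv⟩ := applyT_var hs (Option.some.inj h)
    exact ⟨rfl, hv⟩

lemma headHasVar_apply {s : ℕ → Term} {σ : Rule} {v : ℕ} (hv : s v = Term.var v)
    (h : headHasVar σ v) : headHasVar (applyRule s σ) v := by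
  obtain ⟨j, hj⟩ := h
  refine ⟨j, ?_⟩
  show ((σ.head.args.map (applyT s))[j]?) = some (Term.var v)
  rw [List.getElem?_map, hj]
  simp [applyT, hv]

lemma occPred_apply {s : ℕ → Term} {σ : Rule} {i p} (h : occPred (applyRule s σ) i p) :
    occPred σ i p := by
  obtain ⟨a', ha', hp⟩ := h
  simp only [applyRule, List.getElem?_map] at ha'
  cases hb : σ.body[i]? with
  | none => rw [hb] at ha'; cases ha'
  | some a =>
    rw [hb] at ha'; cases ha'
    exact ⟨a, hb, hp⟩

lemma marked_mem {S : Set Rule} {σ i j} (h : Marked S σ i j) : σ ∈ S := by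
  induction h with
  | prelim hσ _ _ => exact hσ
  | prop _ _ hσ _ _ _ _ => exact hσ

lemma marked_pull (S0 : Set Rule) (θ : Rule → ℕ → Term)
    (hθ : ∀ σ v, θ σ v = Term.var v ∨ ∃ c, θ σ v = Term.const c) :
    ∀ {σ'' i j}, Marked {σ' | ∃ σ ∈ S0, σ' = applyRule (θ σ) σ} σ'' i j →
      ∀ σ ∈ S0, σ'' = applyRule (θ σ) σ → Marked S0 σ i j := by
  intro σ'' i j h
  induction h with
  | @prelim σ₀ i j v _ hocc hnh =>
    intro σ hσ heq
    subst heq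
    obtain ⟨h1, h2⟩ := occAt_apply (hθ σ) hocc
    exact Marked.prelim hσ h1 (fun hh => hnh (headHasVar_apply h2 hh))
  | @prop σ₀'' i j p σ₀''' v i' j' hm hpred hmem hhp hhj hocc ih =>
    intro σ hσ heq
    subst heq
    obtain ⟨τ, hτ, rfl⟩ := (marked_mem hm : _)
    have hm0 := ih τ hτ rfl
    obtain ⟨h1, _⟩ := headGet_apply (hθ σ) hhj
    obtain ⟨h2, _⟩ := occAt_apply (hθ σ) hocc
    exact Marked.prop hm0 (occPred_apply hpred) hσ hhp h1 h2

/-- Grounding variables cannot break stickiness. Let `Σ'` be obtained from `Σ`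
by replacing, in each rule `σ`, certain body variables by constants (the
substitution `θ σ` maps each variable either to itself or to a constant).
Then: (1) every occurrence marked in `Σ'` corresponds to an occurrence marked
in `Σ`; (2) consequently, if in `Σ` every marked variable occurring more than
once in a rule body is among the replaced (grounded) variables, then `Σ'` is
sticky. -/
theorem grounding_preserves_stickiness
    (S0 : Set Rule) (θ : Rule → ℕ → Term)
    (hθ : ∀ σ v, θ σ v = Term.var v ∨ ∃ c, θ σ v = Term.const c) :
    let S' : Set Rule := {σ' | ∃ σ ∈ S0, σ' = applyRule (θ σ) σ}
    (∀ σ ∈ S0, ∀ i j, Marked S' (applyRule (θ σ) σ) i j → Marked S0 σ i j) ∧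
    ((∀ σ ∈ S0, ∀ v i j i' j', Marked S0 σ i j → occAt σ i j (Term.var v) →
        occAt σ i' j' (Term.var v) → (i, j) ≠ (i', j') →
        ∃ c, θ σ v = Term.const c) →
      Sticky S') := by
  intro S'
  constructor
  · intro σ hσ i j hm
    exact marked_pull S0 θ hθ hm σ hσ rfl
  · intro H σ'' hσ'' i j v i' j' hm hocc hocc'
    obtain ⟨σ, hσ, rfl⟩ := hσ''
    have hm0 := marked_pull S0 θ hθ hm σ hσ rfl
    obtain ⟨h1, hv⟩ := occAt_apply (hθ σ) hocc
    obtain ⟨h2, _⟩ := occAt_apply (hθ σ) hocc'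
    by_contra hne
    obtain ⟨c, hc⟩ := H σ hσ v i j i' j' hm0 h1 h2 hne
    rw [hc] at hv
    cases hv
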